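/- Let Γ be a graph on which a group G acts by graph automorphisms such that the quotient graph G\Γ is finite and every vertex of Γ has degree at most 2. Then every connected component Y of Γ is either finite or isometric (as a graph) to the bi-infinite line; in particular, no component is a half-line (a ray with one endpoint). -/
import Mathlib

open SimpleGraph

section Stmt15Aux

variable {V : Type*} {Γ : SimpleGraph V}

/-- If `dist w u = n + 1`, there is a neighbor of `u` at distance `n` from `w`. -/
lemma stmt15_exists_adj_dist {w u : V} (h : Γ.Reachable w u) {n : ℕ}
    (hd : Γ.dist w u = n + 1) :
    ∃ y, Γ.Adj y u ∧ Γ.Reachable w y ∧ Γ.dist w y = n := by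
  obtain ⟨p, hp⟩ := h.exists_walk_length_eq_dist
  have hq : p.reverse.length = n + 1 := by rw [SimpleGraph.Walk.length_reverse, hp, hd]
  generalize p.reverse = q at hq
  cases q with
  | nil => simp at hq
  | @cons _ y _ ha r =>
    have hr : r.length = n := by simpa using hq
    have hwy : Γ.Reachable w y := ⟨r.reverse⟩
    have h1 : Γ.dist w y ≤ n := by
      have := Γ.dist_le r.reverse
      rwa [SimpleGraph.Walk.length_reverse, hr] at this
    have h2 : n ≤ Γ.dist w y := by
      obtain ⟨s, hs⟩ := hwy.exists_walk_length_eq_dist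
      have := Γ.dist_le (s.concat ha.symm)
      rw [SimpleGraph.Walk.length_concat, hs, hd] at this
      omega
    exact ⟨y, ha.symm, hwy, le_antisymm h1 h2⟩

/-- In a graph of max degree `2`, at each distance from a vertex `w` of degree `≤ 1`
there is at most one vertex. -/
lemma stmt15_unique_at_dist
    (hdeg : ∀ v : V, (Γ.neighborSet v).Finite ∧ (Γ.neighborSet v).ncard ≤ 2)
    {w : V} (hw : (Γ.neighborSet w).ncard ≤ 1) :
    ∀ n : ℕ, ∀ u u', Γ.Reachable w u → Γ.Reachable w u' →
      Γ.dist w u = n → Γ.dist w u' = n → u = u' := by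
  intro n
  induction n using Nat.strong_induction_on with
  | _ n ih =>
    match n with
    | 0 =>
      intro u u' hu hu' h h'
      rw [hu.dist_eq_zero_iff] at h
      rw [hu'.dist_eq_zero_iff] at h'
      rw [← h, ← h']
    | 1 =>
      intro u u' hu hu' h h'
      rw [Γ.dist_eq_one_iff_adj] at h h'
      exact (Set.ncard_le_one (hdeg w).1).mp hw u h u' h'
    | (m + 2) =>
      intro u u' hu hu' h h'
      obtain ⟨y, hyu, hwy, hy⟩ := stmt15_exists_adj_dist hu h
      obtain ⟨y', hyu', hwy', hy'⟩ := stmt15_exists_adj_dist hu' h'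
      have hyy : y = y' := ih (m + 1) (by omega) y y' hwy hwy' hy hy'
      subst hyy
      obtain ⟨z, hzy, hwz, hz⟩ := stmt15_exists_adj_dist hwy hy
      by_contra hne
      have hzu : z ≠ u := by rintro rfl; omega
      have hzu' : z ≠ u' := by rintro rfl; omega
      have hsub : ({z, u, u'} : Set V) ⊆ Γ.neighborSet y := by
        intro x hx
        rcases hx with rfl | rfl | rfl
        · exact hzy.symm
        · exact hyu
        · exact hyu'
      have h3 : ({z, u, u'} : Set V).ncard = 3 := by
        rw [Set.ncard_insert_of_notMem (by simp [hzu, hzu'])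
          ((Set.finite_singleton u').insert u), Set.ncard_pair hne]
      have := Set.ncard_le_ncard hsub (hdeg y).1
      have := (hdeg y).2
      omega

/-- Intermediate distances from `w` are realized. -/
lemma stmt15_exists_at_dist {w : V} :
    ∀ n : ℕ, ∀ u, Γ.Reachable w u → Γ.dist w u = n →
      ∀ k ≤ n, ∃ x, Γ.Reachable w x ∧ Γ.dist w x = k := by
  intro n
  induction n with
  | zero =>
    intro u hu hd k hk
    exact ⟨u, hu, by omega⟩
  | succ m ih =>
    intro u hu hd k hk
    rcases eq_or_lt_of_le hk with rfl | hk'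
    · exact ⟨u, hu, hd⟩
    · obtain ⟨y, _, hwy, hy⟩ := stmt15_exists_adj_dist hu hd
      exact ih y hwy hy k (by omega)

end Stmt15Aux

/-- If a group `G` acts by automorphisms on a graph `Γ` with finite quotient and all
vertex degrees at most `2`, then no connected component is a half-line: every infinite
component is a bi-infinite line, i.e. all of its vertices have degree exactly `2`. -/
theorem stmt15 {G V : Type*} [Group G] [MulAction G V] (Γ : SimpleGraph V)
    (hact : ∀ (g : G) (u v : V), Γ.Adj u v ↔ Γ.Adj (g • u) (g • v))
    (hquot : Finite (Quotient (MulAction.orbitRel G V)))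
    (hdeg : ∀ v : V, (Γ.neighborSet v).Finite ∧ (Γ.neighborSet v).ncard ≤ 2) :
    ∀ v : V, ¬ (Γ.connectedComponentMk v).supp.Finite →
      ∀ w ∈ (Γ.connectedComponentMk v).supp, (Γ.neighborSet w).ncard = 2 := by
  intro v hinf w hwsupp
  by_contra hne2
  have hw1 : (Γ.neighborSet w).ncard ≤ 1 := by
    have := (hdeg w).2
    omega
  -- graph homomorphism given by the action of `g`
  let φ : G → (Γ →g Γ) := fun g =>
    ⟨fun x => g • x, fun h => (hact g _ _).mp h⟩
  have hreach_smul : ∀ (g : G) (x y : V), Γ.Reachable x y → Γ.Reachable (g • x) (g • y) :=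
    fun g x y h => h.map (φ g)
  have hdist_le : ∀ (g : G) (x y : V), Γ.dist (g • x) (g • y) ≤ Γ.dist x y := by
    intro g x y
    by_cases hr : Γ.Reachable x y
    · obtain ⟨p, hp⟩ := hr.exists_walk_length_eq_dist
      have := Γ.dist_le (p.map (φ g))
      rwa [SimpleGraph.Walk.length_map, hp] at this
    · rw [Γ.dist_eq_zero_of_not_reachable hr]
      rw [Γ.dist_eq_zero_of_not_reachable]
      intro hc
      exact hr (by simpa using hreach_smul g⁻¹ _ _ hc)
  have hdist : ∀ (g : G) (x y : V), Γ.dist (g • x) (g • y) = Γ.dist x y := by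
    intro g x y
    refine le_antisymm (hdist_le g x y) ?_
    have := hdist_le g⁻¹ (g • x) (g • y)
    simpa using this
  -- membership in the component means reachability to `v`
  have hsupp : ∀ x : V, x ∈ (Γ.connectedComponentMk v).supp ↔ Γ.Reachable x v := by
    intro x
    rw [SimpleGraph.ConnectedComponent.mem_supp_iff]
    exact SimpleGraph.ConnectedComponent.eq
  have hwv : Γ.Reachable w v := (hsupp w).mp hwsupp
  have hwreach : ∀ x ∈ (Γ.connectedComponentMk v).supp, Γ.Reachable w x :=
    fun x hx => hwv.trans ((hsupp x).mp hx).symm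
  -- two distinct points of the component in the same orbit
  have hninj : ¬ Set.InjOn (fun u => Quotient.mk (MulAction.orbitRel G V) u)
      (Γ.connectedComponentMk v).supp := by
    intro hinj
    exact hinf (Set.Finite.of_finite_image (Set.toFinite _) hinj)
  rw [Set.InjOn] at hninj
  push_neg at hninj
  obtain ⟨a, ha, b, hb, hab, hane⟩ := hninj
  obtain ⟨g, hg⟩ : ∃ g : G, g • b = a := by
    have := Quotient.eq''.mp hab
    exact MulAction.mem_orbit_iff.mp this
  -- `g` preserves the component
  have hgsupp : ∀ x ∈ (Γ.connectedComponentMk v).supp,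
      g • x ∈ (Γ.connectedComponentMk v).supp := by
    intro x hx
    rw [hsupp]
    have h1 : Γ.Reachable x b := ((hsupp x).mp hx).trans ((hsupp b).mp hb).symm
    have h2 : Γ.Reachable (g • x) a := hg ▸ hreach_smul g x b h1
    exact h2.trans ((hsupp a).mp ha)
  -- the image of `w` under `g` also has degree ≤ 1
  have hnbimage : Γ.neighborSet (g • w) = (fun x => g • x) '' Γ.neighborSet w := by
    ext x
    simp only [SimpleGraph.mem_neighborSet, Set.mem_image]
    constructor
    · intro h
      refine ⟨g⁻¹ • x, ?_, by simp⟩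
      have := (hact g w (g⁻¹ • x)).mpr
      simpa using this (by simpa using h)
    · rintro ⟨y, hy, rfl⟩
      exact (hact g w y).mp hy
  have hw'1 : (Γ.neighborSet (g • w)).ncard ≤ 1 := by
    rw [hnbimage, Set.ncard_image_of_injective _ (MulAction.injective g)]
    exact hw1
  have hw'supp : g • w ∈ (Γ.connectedComponentMk v).supp := hgsupp w hwsupp
  have hww' : Γ.Reachable w (g • w) := hwreach _ hw'supp
  -- `g` must fix `w`, else the component would be finite
  have hgw : g • w = w := by
    by_contra hgww
    set d := Γ.dist w (g • w) with hd
    have hd1 : 1 ≤ d := hww'.pos_dist_of_ne (fun h => hgww h.symm)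
    -- no vertex at distance d + 1 from w
    have hnod : ∀ x, Γ.Reachable w x → Γ.dist w x ≠ d + 1 := by
      intro x hx hdx
      obtain ⟨y, hyx, hwy, hy⟩ := stmt15_exists_adj_dist hx hdx
      have hyw' : y = g • w :=
        stmt15_unique_at_dist hdeg hw1 d y (g • w) hwy hww' hy hd.symm
      subst hyw'
      obtain ⟨z, hzy, hwz, hz⟩ : ∃ z, Γ.Adj z (g • w) ∧ Γ.Reachable w z ∧
          Γ.dist w z = d - 1 := by
        have : Γ.dist w (g • w) = (d - 1) + 1 := by omega
        exact stmt15_exists_adj_dist hww' this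
      have hzx : z ≠ x := by rintro rfl; omega
      have h2 : 1 < (Γ.neighborSet (g • w)).ncard := by
        rw [Set.one_lt_ncard_iff (hdeg (g • w)).1]
        exact ⟨z, x, hzy.symm, hyx, hzx⟩
      omega
    -- hence all distances from w in the component are ≤ d
    have hbdd : ∀ x ∈ (Γ.connectedComponentMk v).supp, Γ.dist w x ≤ d := by
      intro x hx
      by_contra hgt
      push_neg at hgt
      obtain ⟨y, hwy, hy⟩ := stmt15_exists_at_dist (Γ.dist w x) x (hwreach x hx) rfl
        (d + 1) (by omega)
      exact hnod y hwy hy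
    -- so the component is finite: distance from w is injective on it
    have hfin : (Γ.connectedComponentMk v).supp.Finite := by
      have hinj : Set.InjOn (fun x => Γ.dist w x) (Γ.connectedComponentMk v).supp := by
        intro x hx y hy hxy
        exact stmt15_unique_at_dist hdeg hw1 (Γ.dist w y) x y (hwreach x hx)
          (hwreach y hy) hxy rfl
      refine Set.Finite.of_finite_image ?_ hinj
      exact (Set.finite_Iic d).subset (by rintro _ ⟨x, hx, rfl⟩; exact hbdd x hx)
    exact hinf hfin
  -- `g` fixes every vertex of the component, contradicting `g • b = a ≠ b`
  have hfix : ∀ x ∈ (Γ.connectedComponentMk v).supp, g • x = x := by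
    intro x hx
    have h1 : Γ.dist w (g • x) = Γ.dist w x := by
      conv_lhs => rw [← hgw]
      exact hdist g w x
    exact stmt15_unique_at_dist hdeg hw1 (Γ.dist w x) (g • x) x
      (hwreach _ (hgsupp x hx)) (hwreach x hx) h1 rfl
  have := hfix b hb
  rw [hg] at this
  exact hane this
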